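/- Let I ⊂ (0,∞) be an open interval and let w : I → ℝ be a differentiable solution of w'(r) = (2w(r)³ + 2w(r) − √3(1 + w(r)²)^{3/2})/r with w(r) > √3 for all r ∈ I. Then there exists a constant C > 0 such that 2w(r)/(1 + w(r)²)^{1/2} − √3 = C²·r² for all r ∈ I. -/

import Mathlib

/-- any differentiable solution of `w' = (2w³ + 2w − √3(1+w²)^{3/2})/r` on an
open interval `I ⊆ (0,∞)` with `w > √3` satisfies the first integral
`2w/√(1+w²) − √3 = C²r²` for some constant `C > 0`. -/
theorem stmt_8 (a b : ℝ) (I : Set ℝ) (hI : I = Set.Ioo a b) (hIpos : I ⊆ Set.Ioi 0)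
    (w : ℝ → ℝ)
    (hw : ∀ r ∈ I, HasDerivAt w
      ((2 * (w r) ^ 3 + 2 * w r - Real.sqrt 3 * (Real.sqrt (1 + (w r) ^ 2)) ^ 3) / r) r)
    (hgt : ∀ r ∈ I, Real.sqrt 3 < w r) :
    ∃ C : ℝ, 0 < C ∧ ∀ r ∈ I,
      2 * w r / Real.sqrt (1 + (w r) ^ 2) - Real.sqrt 3 = C ^ 2 * r ^ 2 := by
  rcases Set.eq_empty_or_nonempty I with hE | ⟨r0, hr0⟩
  · exact ⟨1, one_pos, by simp [hE]⟩
  set f : ℝ → ℝ := fun r => 2 * w r / Real.sqrt (1 + (w r) ^ 2) - Real.sqrt 3 with hf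
  set g : ℝ → ℝ := fun r => f r / r ^ 2 with hg
  have hderiv : ∀ r ∈ I, HasDerivAt g 0 r := by
    intro r hr
    have hrpos : 0 < r := hIpos hr
    have hw' := hw r hr
    have ht : (0:ℝ) < 1 + (w r) ^ 2 := by positivity
    have hs : 0 < Real.sqrt (1 + (w r) ^ 2) := Real.sqrt_pos.2 ht
    have hsq : Real.sqrt (1 + (w r) ^ 2) ^ 2 = 1 + (w r) ^ 2 := Real.sq_sqrt ht.le
    set D := (2 * (w r) ^ 3 + 2 * w r - Real.sqrt 3 * (Real.sqrt (1 + (w r) ^ 2)) ^ 3) / r with hD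
    have h1 : HasDerivAt (fun x => 1 + (w x) ^ 2) (2 * w r ^ 1 * D) r :=
      (hw'.pow 2).const_add 1
    have h2 : HasDerivAt (fun x => Real.sqrt (1 + (w x) ^ 2))
        (1 / (2 * Real.sqrt (1 + (w r) ^ 2)) * (2 * w r ^ 1 * D)) r :=
      (Real.hasDerivAt_sqrt ht.ne').comp r h1
    have h3 : HasDerivAt f
        ((2 * D * Real.sqrt (1 + (w r) ^ 2) -
          2 * w r * (1 / (2 * Real.sqrt (1 + (w r) ^ 2)) * (2 * w r ^ 1 * D))) /
          Real.sqrt (1 + (w r) ^ 2) ^ 2) r :=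
      ((hw'.const_mul 2).div h2 hs.ne').sub_const _
    have h4 := h3.div (hasDerivAt_pow 2 r) (by positivity : r ^ 2 ≠ (0:ℝ))
    convert h4 using 1
    · rfl
    · rfl
    · rfl
    rw [hD]
    have h3s : Real.sqrt (1 + (w r) ^ 2) ^ 3 = (1 + (w r) ^ 2) * Real.sqrt (1 + (w r) ^ 2) := by
      rw [pow_succ, hsq]
    rw [h3s]
    simp only [hf]
    field_simp [hs.ne', hrpos.ne']
    linear_combination (Real.sqrt (1 + w r ^ 2) * (2 * r * Real.sqrt 3 * w r ^ 2 + 8 * r ^ 3 * w r + 8 * r ^ 3 * w r ^ 3) - 4 * r * w r ^ 3 - 4 * r ^ 3 * Real.sqrt 3 * (1 + w r ^ 2) * Real.sqrt (1 + w r ^ 2) ^ 2 - 8 * w r * (1 + w r ^ 2) * r ^ 3 * Real.sqrt (1 + w r ^ 2) + 4 * r ^ 3 * Real.sqrt 3 * (1 + w r ^ 2) * Real.sqrt (1 + w r ^ 2) ^ 2) * hsq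
  have hconst : ∀ x ∈ I, ∀ y ∈ I, g x = g y := by
    rw [hI] at *
    intro x hx y hy
    rcases lt_trichotomy x y with h | h | h
    · have hsub : Set.Icc x y ⊆ Set.Ioo a b := fun z hz => ⟨lt_of_lt_of_le hx.1 hz.1, lt_of_le_of_lt hz.2 hy.2⟩
      have hsub' : Set.Ioo x y ⊆ Set.Ioo a b := fun z hz => ⟨lt_trans hx.1 hz.1, lt_trans hz.2 hy.2⟩
      obtain ⟨c, hc, hc'⟩ := exists_hasDerivAt_eq_slope g (fun _ => 0) h
        (fun z hz => ((hderiv z (hsub hz)).continuousAt).continuousWithinAt)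
        (fun z hz => hderiv z (hsub' hz))
      have hne : y - x ≠ 0 := sub_ne_zero.2 h.ne'
      rcases div_eq_zero_iff.mp hc'.symm with h' | h'
      · linarith
      · exact absurd h' hne
    · rw [h]
    · have hsub : Set.Icc y x ⊆ Set.Ioo a b := fun z hz => ⟨lt_of_lt_of_le hy.1 hz.1, lt_of_le_of_lt hz.2 hx.2⟩
      have hsub' : Set.Ioo y x ⊆ Set.Ioo a b := fun z hz => ⟨lt_trans hy.1 hz.1, lt_trans hz.2 hx.2⟩
      obtain ⟨c, hc, hc'⟩ := exists_hasDerivAt_eq_slope g (fun _ => 0) h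
        (fun z hz => ((hderiv z (hsub hz)).continuousAt).continuousWithinAt)
        (fun z hz => hderiv z (hsub' hz))
      have hne : x - y ≠ 0 := sub_ne_zero.2 h.ne'
      rcases div_eq_zero_iff.mp hc'.symm with h' | h'
      · linarith
      · exact absurd h' hne
  -- positivity at r0
  have hr0pos : 0 < r0 := hIpos hr0
  have ht0 : (0:ℝ) < 1 + (w r0) ^ 2 := by positivity
  have hs0 : 0 < Real.sqrt (1 + (w r0) ^ 2) := Real.sqrt_pos.2 ht0
  have hsq0 : Real.sqrt (1 + (w r0) ^ 2) ^ 2 = 1 + (w r0) ^ 2 := Real.sq_sqrt ht0.le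
  have hw0 : Real.sqrt 3 < w r0 := hgt r0 hr0
  have h3nn : (0:ℝ) ≤ Real.sqrt 3 := Real.sqrt_nonneg 3
  have h3sq : Real.sqrt 3 ^ 2 = 3 := Real.sq_sqrt (by norm_num)
  have hfpos : 0 < f r0 := by
    have hkey : Real.sqrt 3 * Real.sqrt (1 + (w r0) ^ 2) < 2 * w r0 := by
      nlinarith [hsq0, hs0, h3sq, h3nn, hw0]
    have : Real.sqrt 3 < 2 * w r0 / Real.sqrt (1 + (w r0) ^ 2) := by
      rw [lt_div_iff₀ hs0]; linarith
    simpa [hf] using sub_pos.mpr this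
  have hgpos : 0 < g r0 := div_pos hfpos (by positivity)
  refine ⟨Real.sqrt (g r0), Real.sqrt_pos.2 hgpos, ?_⟩
  intro r hr
  have hrpos : 0 < r := hIpos hr
  have := hconst r hr r0 hr0
  have hC : Real.sqrt (g r0) ^ 2 = g r0 := Real.sq_sqrt hgpos.le
  rw [hC]
  have : f r = g r0 * r ^ 2 := by
    rw [← this, hg]
    field_simp
  simpa [hf] using this
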